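/- Let ν ∈ (0,1), let ι be a finite index set with |ι| ≥ 2, and let m : ι → ℝ. Let x₁ be an index maximizing m over ι and x₂ an index maximizing m over ι \ {x₁}. Then max_{a∈ι} ξ(a;m) = exp(m[x₁]) + h(ν)·exp( (m[x₂] − ν·m[x₁]) / (1−ν) ). -/

import Mathlib

open Real MeasureTheory Finset

set_option linter.unusedSectionVars false

noncomputable section

variable {ι : Type*} [Fintype ι] [DecidableEq ι]

/-- The log-likelihood update function `J(y) = (1-ν)y + ln ν`. -/
def Jfun (ν y : ℝ) : ℝ := (1 - ν) * y + Real.log ν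

/-- `h(ν) = exp(ν ln ν/(1-ν)) - exp(ln ν/(1-ν))`. -/
def hfun (ν : ℝ) : ℝ :=
  Real.exp (ν * Real.log ν / (1 - ν)) - Real.exp (Real.log ν / (1 - ν))

/-- `g(ν) = exp(ln ν/(1-ν)) (1/(ν+1) - ln ν/(1-ν))`. -/
def gfun (ν : ℝ) : ℝ :=
  Real.exp (Real.log ν / (1 - ν)) * (1 / (ν + 1) - Real.log ν / (1 - ν))

/-- Kronecker delta `δ[a,x]` as a real number. -/
def kdelta (a x : ι) : ℝ := if x = a then 1 else 0

theorem univ_nonempty_of_card (hcard : 2 ≤ Fintype.card ι) :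
    (Finset.univ : Finset ι).Nonempty := by
  rw [← Finset.card_pos]
  have : (Finset.univ : Finset ι).card = Fintype.card ι := rfl
  omega

theorem erase_nonempty_of_card (hcard : 2 ≤ Fintype.card ι) (a : ι) :
    ((Finset.univ : Finset ι).erase a).Nonempty := by
  rw [← Finset.card_pos, Finset.card_erase_of_mem (Finset.mem_univ a)]
  have : (Finset.univ : Finset ι).card = Fintype.card ι := rfl
  omega

theorem pairs_nonempty_of_card (hcard : 2 ≤ Fintype.card ι) :
    ((Finset.univ : Finset (ι × ι)).filter fun p => p.1 ≠ p.2).Nonempty := by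
  obtain ⟨a, b, hab⟩ := Fintype.exists_pair_of_one_lt_card (α := ι) (by omega)
  exact ⟨(a, b), by simp [hab]⟩

/-- `max_{â ≠ a} m[â]`. -/
def maxOther (hcard : 2 ≤ Fintype.card ι) (m : ι → ℝ) (a : ι) : ℝ :=
  ((Finset.univ : Finset ι).erase a).sup' (erase_nonempty_of_card hcard a) m

/-- `ξ(a; m)`. -/
def xi (ν : ℝ) (hcard : 2 ≤ Fintype.card ι) (m : ι → ℝ) (a : ι) : ℝ :=
  if maxOther hcard m a - m a < Real.log ν then Real.exp (m a)
  else Real.exp (maxOther hcard m a)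
    + hfun ν * Real.exp ((m a - ν * maxOther hcard m a) / (1 - ν))

/-- `min_{x_i ≠ x_j} (m[x_i] - ν m[x_j])`, over ordered pairs of distinct indices. -/
def minPair (ν : ℝ) (hcard : 2 ≤ Fintype.card ι) (m : ι → ℝ) : ℝ :=
  (((Finset.univ : Finset (ι × ι)).filter fun p => p.1 ≠ p.2).inf'
    (pairs_nonempty_of_card hcard)) (fun p => m p.1 - ν * m p.2)

/-- The feedback density `f(y | m, a) = b[a] ν e^{-νy} + (1-b[a]) e^{-y}`. -/
def fdens (ν : ℝ) (m : ι → ℝ) (a : ι) (y : ℝ) : ℝ :=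
  (Real.exp (m a) / ∑ l, Real.exp (m l)) * (ν * Real.exp (-ν * y))
    + (1 - Real.exp (m a) / ∑ l, Real.exp (m l)) * Real.exp (-y)

/-- Terminal value `V_L(m) = max_x exp(m[x]) / ∑_l exp(m[l])`. -/
def Vterm (hcard : 2 ≤ Fintype.card ι) (m : ι → ℝ) : ℝ :=
  ((Finset.univ : Finset ι).sup' (univ_nonempty_of_card hcard) fun x => Real.exp (m x))
    / ∑ l, Real.exp (m l)


section AuxMaxXi

lemma hasDerivAt_exp_mul (c x : ℝ) :
    HasDerivAt (fun x => Real.exp (c*x)) (c * Real.exp (c*x)) x := by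
  simpa [mul_comm, Function.comp_def] using (Real.hasDerivAt_exp (c*x)).comp x ((hasDerivAt_id x).const_mul c)

lemma chi_anti {ν : ℝ} (hν0 : 0 ≤ ν) (hν1 : ν ≤ 1) :
    AntitoneOn (fun x => Real.exp (ν*x) - ν * Real.exp x) (Set.Ici 0) := by
  apply antitoneOn_of_deriv_nonpos (convex_Ici 0)
  · fun_prop
  · intro x hx
    exact (((hasDerivAt_exp_mul ν x).sub
      ((Real.hasDerivAt_exp x).const_mul ν)).differentiableAt).differentiableWithinAt
  · intro x hx
    rw [interior_Ici] at hx
    rw [HasDerivAt.deriv (f := fun x => Real.exp (ν*x) - ν * Real.exp x)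
      ((hasDerivAt_exp_mul ν x).sub ((Real.hasDerivAt_exp x).const_mul ν))]
    have : Real.exp (ν*x) ≤ Real.exp x := by
      apply Real.exp_le_exp.2
      nlinarith [le_of_lt (Set.mem_Ioi.1 hx)]
    nlinarith [Real.exp_pos x, Real.exp_pos (ν*x)]

lemma key {ν u s : ℝ} (hν0 : 0 ≤ ν) (hν1 : ν ≤ 1) (hs0 : 0 ≤ s) (hsu : s ≤ u) :
    (Real.exp (-(ν*u)) - Real.exp (-u)) * (1 - Real.exp (-((1+ν)*s)))
      ≤ Real.exp (-(ν*s)) - Real.exp (-s) := by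
  have hu : 0 ≤ u := hs0.trans hsu
  set C : ℝ := Real.exp (-(ν*u)) - Real.exp (-u) with hCdef
  have hC0 : 0 ≤ C := sub_nonneg.2 (Real.exp_le_exp.2 (by nlinarith))
  set ψ : ℝ → ℝ := fun x =>
    Real.exp ((-ν)*x) - Real.exp ((-1:ℝ)*x) - C*(1 - Real.exp ((-(1+ν))*x)) with hψdef
  have hd : ∀ x : ℝ, HasDerivAt ψ
      (Real.exp ((-(1+ν))*x) * ((Real.exp (ν*x) - ν * Real.exp x) - (1+ν)*C)) x := by
    intro x
    have h := ((hasDerivAt_exp_mul (-ν) x).sub (hasDerivAt_exp_mul (-1) x)).sub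
      (((hasDerivAt_exp_mul (-(1+ν)) x).const_sub 1).const_mul C)
    refine (h : HasDerivAt ψ _ x).congr_deriv ?_
    have e1 : Real.exp ((-1:ℝ)*x) = Real.exp ((-(1+ν))*x) * Real.exp (ν*x) := by
      rw [← Real.exp_add]; ring_nf
    have e2 : Real.exp ((-ν)*x) = Real.exp ((-(1+ν))*x) * Real.exp x := by
      rw [← Real.exp_add]; ring_nf
    rw [e1, e2]; ring
  have hψ0 : ψ 0 = 0 := by simp [hψdef]
  have hψu : ψ u = C * Real.exp ((-(1+ν))*u) := by
    simp only [hψdef, hCdef]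
    have e2 : Real.exp ((-ν)*u) = Real.exp (-(ν*u)) := by ring_nf
    have e3 : Real.exp ((-1:ℝ)*u) = Real.exp (-u) := by ring_nf
    rw [e2, e3]; ring
  have hgoal : 0 ≤ ψ s → (Real.exp (-(ν*u)) - Real.exp (-u)) * (1 - Real.exp (-((1+ν)*s)))
      ≤ Real.exp (-(ν*s)) - Real.exp (-s) := by
    intro h
    have e2 : Real.exp ((-ν)*s) = Real.exp (-(ν*s)) := by ring_nf
    have e3 : Real.exp ((-1:ℝ)*s) = Real.exp (-s) := by ring_nf
    have e4 : Real.exp ((-(1+ν))*s) = Real.exp (-((1+ν)*s)) := by ring_nf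
    simp only [hψdef, e2, e3, e4] at h
    rw [← hCdef]
    linarith
  apply hgoal
  by_cases hcase : (1+ν)*C ≤ Real.exp (ν*s) - ν * Real.exp s
  · -- ψ monotone on [0,s]
    have hmono : MonotoneOn ψ (Set.Icc 0 s) := by
      apply monotoneOn_of_deriv_nonneg (convex_Icc 0 s)
      · exact fun x _ => ((hd x).continuousAt).continuousWithinAt
      · exact fun x _ => ((hd x).differentiableAt).differentiableWithinAt
      · intro x hx
        rw [interior_Icc] at hx
        rw [(hd x).deriv]
        have hχ : Real.exp (ν*s) - ν * Real.exp s ≤ Real.exp (ν*x) - ν * Real.exp x :=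
          chi_anti hν0 hν1 (Set.mem_Ici.2 hx.1.le) (Set.mem_Ici.2 hs0) hx.2.le
        nlinarith [Real.exp_pos ((-(1+ν))*x)]
    have := hmono (Set.mem_Icc.2 ⟨le_refl 0, hs0⟩) (Set.mem_Icc.2 ⟨hs0, le_refl s⟩) hs0
    linarith [hψ0 ▸ this]
  · -- ψ antitone on [s,u]
    push_neg at hcase
    have hanti : AntitoneOn ψ (Set.Icc s u) := by
      apply antitoneOn_of_deriv_nonpos (convex_Icc s u)
      · exact fun x _ => ((hd x).continuousAt).continuousWithinAt
      · exact fun x _ => ((hd x).differentiableAt).differentiableWithinAt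
      · intro x hx
        rw [interior_Icc] at hx
        rw [(hd x).deriv]
        have hχ : Real.exp (ν*x) - ν * Real.exp x ≤ Real.exp (ν*s) - ν * Real.exp s :=
          chi_anti hν0 hν1 (Set.mem_Ici.2 hs0) (Set.mem_Ici.2 (hs0.trans hx.1.le)) hx.1.le
        nlinarith [Real.exp_pos ((-(1+ν))*x)]
    have := hanti (Set.mem_Icc.2 ⟨le_refl s, hsu⟩) (Set.mem_Icc.2 ⟨hsu, le_refl u⟩) hsu
    have h2 : 0 ≤ ψ u := by rw [hψu]; positivity
    linarith

lemma hfun_nonneg {ν : ℝ} (hν : ν ∈ Set.Ioo (0:ℝ) 1) : 0 ≤ hfun ν := by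
  have hl : Real.log ν < 0 := Real.log_neg hν.1 hν.2
  have h1 : (0:ℝ) < 1 - ν := by linarith [hν.2]
  apply sub_nonneg.2
  apply Real.exp_le_exp.2
  rw [div_le_div_iff₀ h1 h1]
  nlinarith [mul_nonneg (mul_nonneg h1.le h1.le) (neg_nonneg.2 hl.le)]

lemma xi_swap {ν : ℝ} (hν : ν ∈ Set.Ioo (0:ℝ) 1) {m₁ m₂ : ℝ} (h21 : m₂ ≤ m₁)
    (hlog : Real.log ν ≤ m₂ - m₁) :
    Real.exp m₂ + hfun ν * Real.exp ((m₁ - ν*m₂)/(1-ν))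
      ≤ Real.exp m₁ + hfun ν * Real.exp ((m₂ - ν*m₁)/(1-ν)) := by
  have h1 : (0:ℝ) < 1 - ν := by linarith [hν.2]
  have hs0 : 0 ≤ (m₁-m₂)/(1-ν) := div_nonneg (by linarith) h1.le
  have hsu : (m₁-m₂)/(1-ν) ≤ -(Real.log ν)/(1-ν) :=
    (div_le_div_iff_of_pos_right h1).2 (by linarith)
  have key' := key (ν:=ν) hν.1.le hν.2.le hs0 hsu
  have e1 : -(ν * (-(Real.log ν)/(1-ν))) = ν * Real.log ν / (1-ν) := by field_simp
  have e2 : -(-(Real.log ν)/(1-ν)) = Real.log ν/(1-ν) := by ring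
  rw [e1, e2] at key'
  have hmul := mul_le_mul_of_nonneg_right key' (Real.exp_pos (m₂ + (m₁-m₂)/(1-ν))).le
  have p1 : Real.exp (-(ν * ((m₁-m₂)/(1-ν)))) * Real.exp (m₂ + (m₁-m₂)/(1-ν)) = Real.exp m₁ := by
    rw [← Real.exp_add]; congr 1; field_simp; ring
  have p2 : Real.exp (-((m₁-m₂)/(1-ν))) * Real.exp (m₂ + (m₁-m₂)/(1-ν)) = Real.exp m₂ := by
    rw [← Real.exp_add]; congr 1; ring
  have p3 : Real.exp (-((1+ν)*((m₁-m₂)/(1-ν)))) * Real.exp (m₂ + (m₁-m₂)/(1-ν))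
      = Real.exp ((m₂ - ν*m₁)/(1-ν)) := by
    rw [← Real.exp_add]; congr 1; field_simp; ring
  have p4 : Real.exp (m₂ + (m₁-m₂)/(1-ν)) = Real.exp ((m₁ - ν*m₂)/(1-ν)) := by
    congr 1; field_simp; ring
  have q : (1 - Real.exp (-((1+ν)*((m₁-m₂)/(1-ν))))) * Real.exp (m₂ + (m₁-m₂)/(1-ν))
      = Real.exp ((m₁ - ν*m₂)/(1-ν)) - Real.exp ((m₂ - ν*m₁)/(1-ν)) := by
    rw [sub_mul, one_mul, p3, p4]
  rw [mul_assoc, q, sub_mul, sub_mul, p1, p2] at hmul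
  unfold hfun
  nlinarith [hmul]

end AuxMaxXi

/-- `max_a ξ(a;m) = exp(m[x₁]) + h(ν) exp((m[x₂] - ν m[x₁])/(1-ν))`
(the value claim of Lemma 2 of the paper). -/
theorem max_xi_eq
    (ν : ℝ) (hν : ν ∈ Set.Ioo (0:ℝ) 1)
    (hcard : 2 ≤ Fintype.card ι) (m : ι → ℝ)
    (x₁ x₂ : ι) (hx₁ : ∀ x, m x ≤ m x₁) (hne : x₂ ≠ x₁)
    (hx₂ : ∀ x, x ≠ x₁ → m x ≤ m x₂) :
    (Finset.univ : Finset ι).sup' (univ_nonempty_of_card hcard) (xi ν hcard m)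
      = Real.exp (m x₁) + hfun ν * Real.exp ((m x₂ - ν * m x₁) / (1 - ν)) := by
  have hl : Real.log ν < 0 := Real.log_neg hν.1 hν.2
  have h1ν : (0:ℝ) < 1 - ν := by linarith [hν.2]
  have hmo1 : maxOther hcard m x₁ = m x₂ := by
    apply le_antisymm
    · exact Finset.sup'_le _ _ (fun x hx => hx₂ x (Finset.ne_of_mem_erase hx))
    · exact Finset.le_sup' m (Finset.mem_erase.2 ⟨hne, Finset.mem_univ _⟩)
  have hmo : ∀ a, a ≠ x₁ → maxOther hcard m a = m x₁ := by
    intro a ha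
    apply le_antisymm
    · exact Finset.sup'_le _ _ (fun x _ => hx₁ x)
    · exact Finset.le_sup' m (Finset.mem_erase.2 ⟨Ne.symm ha, Finset.mem_univ _⟩)
  apply le_antisymm
  · apply Finset.sup'_le
    intro a _
    by_cases ha : a = x₁
    · rw [ha]
      unfold xi
      rw [hmo1]
      split_ifs with h
      · have h0 := hfun_nonneg hν
        have h2 : 0 ≤ hfun ν * Real.exp ((m x₂ - ν * m x₁)/(1-ν)) :=
          mul_nonneg h0 (Real.exp_pos _).le
        linarith
      · push_neg at h
        exact xi_swap hν (hx₁ x₂) h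
    · unfold xi
      rw [hmo a ha]
      rw [if_neg (by linarith [hx₁ a])]
      have h0 := hfun_nonneg hν
      gcongr
      exact hx₂ a ha
  · have hxx : xi ν hcard m x₂
        = Real.exp (m x₁) + hfun ν * Real.exp ((m x₂ - ν * m x₁) / (1 - ν)) := by
      unfold xi
      rw [hmo x₂ hne, if_neg (by linarith [hx₁ x₂])]
    exact hxx ▸ Finset.le_sup' (xi ν hcard m) (Finset.mem_univ x₂)

end
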